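/- Let G be a finite group and H ≤ G a nontrivial subgroup, and let X = G/H be the coset space on which G acts by multiplication. For g ∈ G let fix_X(g) denote the number of fixed points of g on X. Then D_H > (1/|G|) · Σ_{h ∈ H, h ≠ e} fix_X(h). -/

import Mathlib

open CategoryTheory Finset
open scoped Classical

/-- `D_H`: the total variation distance between the weak quantum Fourier sampling
distributions for the hidden subgroup `H` and for the trivial subgroup, namely
`(1/|G|) · Σ_ρ d_ρ · |Σ_{h ∈ H, h ≠ e} χ_ρ(h)|`, where `ρ` runs over the family
of irreducible representations. -/
noncomputable def weakDist {G : Type} [Group G] [Fintype G] {ι : Type} [Fintype ι]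
    (ρ : ι → FDRep ℂ G) (H : Subgroup G) : ℝ :=
  (Fintype.card G : ℝ)⁻¹ *
    ∑ i : ι, (Module.finrank ℂ (ρ i) : ℝ) *
      ‖∑ h ∈ Finset.univ.filter (fun h : G => h ∈ H ∧ h ≠ 1), (ρ i).character h‖

/-- `ρ : ι → FDRep ℂ G` is a complete family of pairwise non-isomorphic irreducible
complex representations of `G` (one per isomorphism class). -/
def IsCompleteIrrepFamily {G : Type} [Group G] {ι : Type} (ρ : ι → FDRep ℂ G) : Prop :=
  (∀ i, Simple (ρ i)) ∧
  (∀ i j, Nonempty (ρ i ≅ ρ j) → i = j) ∧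
  (∀ V : FDRep ℂ G, Simple V → ∃ i, Nonempty (ρ i ≅ V))

set_option linter.unusedSectionVars false

noncomputable section
namespace QFS

variable {G : Type} [Group G] [Fintype G]

/-- Restriction of a representation to an invariant submodule. -/
def subRep {V : Type} [AddCommGroup V] [Module ℂ V] (τ : Representation ℂ G V)
    (W : Submodule ℂ V) (hW : ∀ g : G, ∀ x ∈ W, τ g x ∈ W) : Representation ℂ G W where
  toFun g := (τ g).restrict (hW g)
  map_one' := by ext x; simp [LinearMap.restrict_apply]
  map_mul' g h := by ext x; simp [LinearMap.restrict_apply]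

lemma subRep_apply {V : Type} [AddCommGroup V] [Module ℂ V] (τ : Representation ℂ G V)
    (W : Submodule ℂ V) (hW : ∀ g : G, ∀ x ∈ W, τ g x ∈ W) (g : G) (x : W) :
    (subRep τ W hW g x : V) = τ g (x : V) := rfl

lemma trace_eq_add {V : Type} [AddCommGroup V] [Module ℂ V] [FiniteDimensional ℂ V]
    (τ : Representation ℂ G V) (W W' : Submodule ℂ V)
    (hW : ∀ g : G, ∀ x ∈ W, τ g x ∈ W) (hW' : ∀ g : G, ∀ x ∈ W', τ g x ∈ W')
    (hc : IsCompl W W') (g : G) :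
    LinearMap.trace ℂ V (τ g) =
      LinearMap.trace ℂ W (subRep τ W hW g) + LinearMap.trace ℂ W' (subRep τ W' hW' g) := by
  set e := Submodule.prodEquivOfIsCompl W W' hc
  have key : e.conj ((subRep τ W hW g).prodMap (subRep τ W' hW' g)) = τ g := by
    apply LinearMap.ext; intro v
    have h2 : ∀ p : W × W', τ g (e p) = e (((subRep τ W hW g).prodMap (subRep τ W' hW' g)) p) := by
      intro p
      simp only [Submodule.coe_prodEquivOfIsCompl', LinearMap.prodMap_apply, e]
      rw [map_add]
      rfl
    have h3 := h2 (e.symm v)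
    rw [e.apply_symm_apply] at h3
    rw [LinearEquiv.conj_apply]
    simpa using h3.symm
  rw [← key, LinearMap.trace_conj', LinearMap.trace_prodMap']

/-- Maschke: an invariant submodule has an invariant complement. -/
lemma exists_invariant_compl {V : Type} [AddCommGroup V] [Module ℂ V] [FiniteDimensional ℂ V]
    (τ : Representation ℂ G V) (W : Submodule ℂ V) (hW : ∀ g : G, ∀ x ∈ W, τ g x ∈ W) :
    ∃ W' : Submodule ℂ V, (∀ g : G, ∀ x ∈ W', τ g x ∈ W') ∧ IsCompl W W' := by
  obtain ⟨C, hC⟩ := Submodule.exists_isCompl W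
  set π₀ : V →ₗ[ℂ] V := W.subtype ∘ₗ W.projectionOnto C hC with hπ₀
  have hπ₀W : ∀ v, π₀ v ∈ W := fun v => (W.projectionOnto C hC v).2
  have hπ₀id : ∀ w ∈ W, π₀ w = w := by
    intro w hw
    simp [hπ₀, Submodule.projectionOnto_apply_left hC ⟨w, hw⟩]
  set T : V →ₗ[ℂ] V :=
    (Fintype.card G : ℂ)⁻¹ • ∑ g : G, (τ g⁻¹) ∘ₗ π₀ ∘ₗ (τ g) with hT
  have hcard : (Fintype.card G : ℂ) ≠ 0 := Nat.cast_ne_zero.mpr Fintype.card_ne_zero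
  have hT1 : ∀ v, T v ∈ W := by
    intro v
    rw [hT]
    simp only [LinearMap.smul_apply, LinearMap.sum_apply, LinearMap.comp_apply]
    exact W.smul_mem _ (Submodule.sum_mem _ fun g _ => hW g⁻¹ _ (hπ₀W _))
  have hT2 : ∀ w ∈ W, T w = w := by
    intro w hw
    rw [hT]
    simp only [LinearMap.smul_apply, LinearMap.sum_apply, LinearMap.comp_apply]
    have : ∀ g : G, τ g⁻¹ (π₀ (τ g w)) = w := by
      intro g
      rw [hπ₀id _ (hW g w hw), ← LinearMap.comp_apply, ← Module.End.mul_eq_comp, ← map_mul,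
        inv_mul_cancel, map_one, Module.End.one_apply]
    rw [Finset.sum_congr rfl fun g _ => this g, Finset.sum_const, Finset.card_univ,
      ← Nat.cast_smul_eq_nsmul ℂ, smul_smul, inv_mul_cancel₀ hcard, one_smul]
  have hT3 : ∀ h : G, ∀ v, T (τ h v) = τ h (T v) := by
    intro h v
    rw [hT]
    simp only [LinearMap.smul_apply, LinearMap.sum_apply, LinearMap.comp_apply, map_smul, map_sum]
    congr 1
    refine Fintype.sum_bijective (· * h) (Group.mulRight_bijective h) _ _ fun g => ?_
    rw [show τ g ((τ h) v) = τ (g * h) v by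
      rw [← LinearMap.comp_apply, ← Module.End.mul_eq_comp, ← map_mul]]
    rw [show τ h ((τ (g * h)⁻¹) (π₀ (τ (g * h) v))) = τ g⁻¹ (π₀ (τ (g * h) v)) by
      rw [← LinearMap.comp_apply, ← Module.End.mul_eq_comp, ← map_mul, mul_inv_rev,
        mul_inv_cancel_left]]
  refine ⟨LinearMap.ker T, ?_, ?_⟩
  · intro g x hx
    simp only [LinearMap.mem_ker] at hx ⊢
    rw [hT3 g x, hx, map_zero]
  · have := LinearMap.isCompl_of_proj (f := T.codRestrict W hT1)
      (fun x : W => Subtype.ext (by simpa using hT2 x x.2))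
    rwa [LinearMap.ker_codRestrict] at this


lemma simple_of_irreducible (V : FDRep ℂ G) (h0 : Module.finrank ℂ V ≠ 0)
    (hirr : ∀ W : Submodule ℂ V, (∀ g : G, ∀ x ∈ W, V.ρ g x ∈ W) → W = ⊥ ∨ W = ⊤) :
    Simple V := by
  constructor
  intro Y f hf
  constructor
  · intro hiso hf0
    subst hf0
    have h1 : (𝟙 V : V ⟶ V) = CategoryTheory.inv (0 : Y ⟶ V) ≫ (0 : Y ⟶ V) :=
      (IsIso.inv_hom_id _).symm
    rw [Limits.comp_zero] at h1
    have : ∀ v : V, v = 0 := by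
      intro v
      have := congrArg (fun (φ : V ⟶ V) => φ.hom.hom.hom v) h1
      simpa using this
    exact h0 (Module.finrank_zero_iff.mpr ⟨fun a b => (this a).trans (this b).symm⟩)
  · intro hf0
    set φ : Y →ₗ[ℂ] V := f.hom.hom.hom with hφ
    have hcomm : ∀ (g : G) (y : Y), φ (Y.ρ g y) = V.ρ g (φ y) := by
      intro g y
      have := congrArg (fun (ψ : Y.V ⟶ V.V) => ψ.hom.hom y) (f.comm g)
      simpa using this
    -- injectivity
    have hker : LinearMap.ker φ = ⊥ := by
      set K := LinearMap.ker φ with hK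
      have hKinv : ∀ g : G, ∀ x ∈ K, Y.ρ g x ∈ K := by
        intro g x hx
        simp only [hK, LinearMap.mem_ker] at hx ⊢
        rw [hcomm g x, hx, map_zero]
      let j : FDRep.of (subRep Y.ρ K hKinv) ⟶ Y :=
        ⟨InducedCategory.homMk (ModuleCat.ofHom K.subtype), fun g => rfl⟩
      have hj : j ≫ f = (0 : FDRep.of (subRep Y.ρ K hKinv) ⟶ V) := by
        apply Action.Hom.ext
        apply FGModuleCat.hom_ext
        apply LinearMap.ext
        intro x
        exact x.2
      rw [show (0 : FDRep.of (subRep Y.ρ K hKinv) ⟶ V) =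
        (0 : FDRep.of (subRep Y.ρ K hKinv) ⟶ Y) ≫ f by rw [Limits.zero_comp]] at hj
      have hj0 := (cancel_mono f).mp hj
      rw [Submodule.eq_bot_iff]
      intro x hx
      have := congrArg (fun (ψ : FDRep.of (subRep Y.ρ K hKinv) ⟶ Y)
        => ψ.hom.hom.hom ⟨x, hx⟩) hj0
      simpa [j] using this
    -- surjectivity
    have hrange : LinearMap.range φ = ⊤ := by
      rcases hirr (LinearMap.range φ) (by
        rintro g x ⟨y, rfl⟩
        exact ⟨Y.ρ g y, hcomm g y⟩) with h | h
      · exfalso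
        apply hf0
        apply Action.Hom.ext
        apply FGModuleCat.hom_ext
        apply LinearMap.ext
        intro y
        have : φ y ∈ LinearMap.range φ := ⟨y, rfl⟩
        rw [h] at this
        simpa using this
      · exact h
    set e : Y ≃ₗ[ℂ] V := LinearEquiv.ofBijective φ
      ⟨LinearMap.ker_eq_bot.mp hker, LinearMap.range_eq_top.mp hrange⟩ with he
    have hsymm : ∀ (g : G) (v : V), e.symm (V.ρ g v) = Y.ρ g (e.symm v) := by
      intro g v
      apply e.injective
      rw [e.apply_symm_apply]
      show V.ρ g v = φ (Y.ρ g (e.symm v))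
      rw [hcomm g (e.symm v)]
      congr 1
      exact (e.apply_symm_apply v).symm
    let finv : V ⟶ Y := ⟨InducedCategory.homMk (ModuleCat.ofHom (e.symm : V →ₗ[ℂ] Y)), fun g => by
      apply FGModuleCat.hom_ext
      apply LinearMap.ext
      intro v
      exact hsymm g v⟩
    refine ⟨⟨finv, ?_, ?_⟩⟩
    · apply Action.Hom.ext
      apply FGModuleCat.hom_ext
      apply LinearMap.ext
      intro y
      show e.symm (φ y) = y
      exact e.symm_apply_apply y
    · apply Action.Hom.ext
      apply FGModuleCat.hom_ext
      apply LinearMap.ext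
      intro v
      show φ (e.symm v) = v
      exact e.apply_symm_apply v


variable {ι : Type} [Fintype ι]

lemma char_of {V : Type} [AddCommGroup V] [Module ℂ V] [FiniteDimensional ℂ V]
    (τ : Representation ℂ G V) (g : G) :
    (FDRep.of τ).character g = LinearMap.trace ℂ V (τ g) := rfl

lemma char_expansion (ρ : ι → FDRep ℂ G) (hρ : IsCompleteIrrepFamily ρ) :
    ∀ (N : ℕ) (V : FDRep ℂ G), Module.finrank ℂ V = N →
      ∃ n : ι → ℕ, ∀ g : G, V.character g = ∑ i, (n i : ℂ) * (ρ i).character g := by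
  intro N
  induction N using Nat.strong_induction_on with
  | _ N ih =>
  intro V hV
  by_cases h0 : Module.finrank ℂ V = 0
  · refine ⟨fun _ => 0, fun g => ?_⟩
    haveI : Subsingleton V := Module.finrank_zero_iff.mp h0
    have hz : V.character g = 0 := by
      show LinearMap.trace ℂ V (V.ρ g) = 0
      rw [Subsingleton.elim (V.ρ g) 0, map_zero]
    simp [hz]
  by_cases hs : Simple V
  · obtain ⟨i0, ⟨iso⟩⟩ := hρ.2.2 V hs
    refine ⟨fun i => if i = i0 then 1 else 0, fun g => ?_⟩
    rw [← FDRep.char_iso iso]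
    rw [Finset.sum_eq_single i0]
    · simp
    · intro b _ hb; simp [hb]
    · intro h; exact absurd (Finset.mem_univ i0) h
  · have hex : ∃ W : Submodule ℂ V, (∀ g : G, ∀ x ∈ W, V.ρ g x ∈ W) ∧ W ≠ ⊥ ∧ W ≠ ⊤ := by
      by_contra hno
      push_neg at hno
      refine hs (simple_of_irreducible V h0 fun W hW => ?_)
      rcases eq_or_ne W ⊥ with h | h
      · exact Or.inl h
      · exact Or.inr (hno W hW h)
    obtain ⟨W, hW, hWbot, hWtop⟩ := hex
    obtain ⟨W', hW', hc⟩ := exists_invariant_compl V.ρ W hW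
    have hsum : Module.finrank ℂ W + Module.finrank ℂ W' = N := by
      rw [← hV]; exact Submodule.finrank_add_eq_of_isCompl hc
    have hWpos : Module.finrank ℂ W ≠ 0 := fun h => hWbot (Submodule.finrank_eq_zero.mp h)
    have hW'pos : Module.finrank ℂ W' ≠ 0 := by
      intro h
      apply hWtop
      have hb : W' = ⊥ := Submodule.finrank_eq_zero.mp h
      have := hc.codisjoint
      rw [codisjoint_iff, hb, sup_bot_eq] at this
      exact this
    obtain ⟨n₁, hn₁⟩ := ih (Module.finrank ℂ W) (by omega) (FDRep.of (subRep V.ρ W hW)) rfl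
    obtain ⟨n₂, hn₂⟩ := ih (Module.finrank ℂ W') (by omega) (FDRep.of (subRep V.ρ W' hW')) rfl
    refine ⟨fun i => n₁ i + n₂ i, fun g => ?_⟩
    have hchar : V.character g = (FDRep.of (subRep V.ρ W hW)).character g
        + (FDRep.of (subRep V.ρ W' hW')).character g := by
      rw [char_of, char_of]
      exact trace_eq_add V.ρ W W' hW hW' hc g
    rw [hchar, hn₁ g, hn₂ g, ← Finset.sum_add_distrib]
    congr 1
    funext i
    push_cast
    ring

lemma sum_char_mul (ρ : ι → FDRep ℂ G) (hρ : IsCompleteIrrepFamily ρ) (i j : ι) :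
    ∑ g : G, (ρ i).character g * (ρ j).character g⁻¹
      = if i = j then (Fintype.card G : ℂ) else 0 := by
  haveI : Invertible (Fintype.card G : ℂ) :=
    invertibleOfNonzero (Nat.cast_ne_zero.mpr Fintype.card_ne_zero)
  have hcard : (Fintype.card G : ℂ) ≠ 0 := Nat.cast_ne_zero.mpr Fintype.card_ne_zero
  have h' : (Fintype.card G : ℂ)⁻¹ * ∑ g : G, (ρ i).character g * (ρ j).character g⁻¹
      = if Nonempty (ρ i ≅ ρ j) then (1 : ℂ) else 0 := by
    haveI := hρ.1 i
    haveI := hρ.1 j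
    have h := FDRep.char_orthonormal (ρ i) (ρ j)
    rw [Nat.card_eq_fintype_card] at h
    exact_mod_cast h
  have h2 : ∑ g : G, (ρ i).character g * (ρ j).character g⁻¹
      = (Fintype.card G : ℂ) * (if Nonempty (ρ i ≅ ρ j) then (1:ℂ) else 0) := by
    rw [← h', ← mul_assoc, mul_inv_cancel₀ hcard, one_mul]
  rcases eq_or_ne i j with rfl | hne
  · rw [if_pos rfl, h2, if_pos ⟨Iso.refl _⟩, mul_one]
  · rw [if_neg hne, h2, if_neg (fun hno => hne (hρ.2.1 i j hno)), mul_zero]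

lemma coeff_eq (ρ : ι → FDRep ℂ G) (hρ : IsCompleteIrrepFamily ρ) (V : FDRep ℂ G)
    (n : ι → ℕ) (hn : ∀ g : G, V.character g = ∑ i, (n i : ℂ) * (ρ i).character g) (j : ι) :
    ∑ g : G, V.character g * (ρ j).character g⁻¹ = (n j : ℂ) * (Fintype.card G : ℂ) :=
  calc ∑ g : G, V.character g * (ρ j).character g⁻¹
      = ∑ g : G, ∑ i, (n i : ℂ) * ((ρ i).character g * (ρ j).character g⁻¹) :=
        Finset.sum_congr rfl (fun g _ => by rw [hn g, Finset.sum_mul]; simp [mul_assoc])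
    _ = ∑ i, ∑ g : G, (n i : ℂ) * ((ρ i).character g * (ρ j).character g⁻¹) := Finset.sum_comm
    _ = ∑ i, (n i : ℂ) * ∑ g : G, ((ρ i).character g * (ρ j).character g⁻¹) := by
        simp [Finset.mul_sum]
    _ = ∑ i, (n i : ℂ) * (if i = j then (Fintype.card G : ℂ) else 0) :=
        Finset.sum_congr rfl fun i _ => by rw [sum_char_mul ρ hρ i j]
    _ = (n j : ℂ) * (Fintype.card G : ℂ) := by simp


/-- number of invariants of the restriction to a subgroup -/
def resInv (H : Subgroup G) (V : FDRep ℂ G) : ℕ :=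
  Module.finrank ℂ (Representation.invariants (V.ρ.comp H.subtype))

lemma sum_char_subgroup (H : Subgroup G) (V : FDRep ℂ G) :
    ∑ h : ↥H, V.character (h : G) = (Fintype.card ↥H : ℂ) * (resInv H V : ℂ) := by
  haveI : Invertible (Fintype.card ↥H : ℂ) :=
    invertibleOfNonzero (Nat.cast_ne_zero.mpr Fintype.card_ne_zero)
  have h := FDRep.average_char_eq_finrank_invariants (FDRep.of (V.ρ.comp H.subtype))
  rw [Nat.card_eq_fintype_card] at h
  have hcard : (Fintype.card ↥H : ℂ) ≠ 0 := Nat.cast_ne_zero.mpr Fintype.card_ne_zero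
  have h2 : ∑ h : ↥H, (FDRep.of (V.ρ.comp H.subtype)).character h
      = (Fintype.card ↥H : ℂ) *
        (Module.finrank ℂ (Representation.invariants (FDRep.of (V.ρ.comp H.subtype)).ρ) : ℂ) := by
    rw [← h, ← mul_assoc, mul_inv_cancel₀ hcard, one_mul]
  have h3 : ∀ h : ↥H, (FDRep.of (V.ρ.comp H.subtype)).character h = V.character (h : G) :=
    fun h => rfl
  rw [Finset.sum_congr rfl (fun h _ => h3 h)] at h2
  rw [h2]
  rfl

lemma sum_filter_eq_sub (H : Subgroup G) (f : G → ℂ) :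
    ∑ h ∈ univ.filter (fun h : G => h ∈ H ∧ h ≠ 1), f h = (∑ h : ↥H, f ↑h) - f 1 := by
  have h1 : (1:G) ∈ univ.filter (fun h : G => h ∈ H) := by simp [H.one_mem]
  have he : univ.filter (fun h : G => h ∈ H ∧ h ≠ 1)
      = (univ.filter (fun h : G => h ∈ H)).erase 1 := by
    ext x
    simp [Finset.mem_erase, and_comm]
  rw [he, Finset.sum_erase_eq_sub h1, Finset.sum_subtype (p := fun x : G => x ∈ H) _ (by simp) f]

lemma sum_filter_char (H : Subgroup G) (V : FDRep ℂ G) :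
    ∑ h ∈ univ.filter (fun h : G => h ∈ H ∧ h ≠ 1), V.character h
      = (Fintype.card ↥H : ℂ) * (resInv H V : ℂ) - (Module.finrank ℂ V : ℂ) := by
  rw [sum_filter_eq_sub, sum_char_subgroup, FDRep.char_one]

lemma char_ofMulAction (X : Type) [Fintype X] [MulAction G X] (g : G) :
    (FDRep.of (Representation.ofMulAction ℂ G X)).character g
      = ((univ.filter (fun x : X => g • x = x)).card : ℂ) := by
  rw [char_of, LinearMap.trace_eq_matrix_trace ℂ (MonoidAlgebra.basis X ℂ)]
  rw [Matrix.trace]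
  have hdiag : ∀ x : X,
      ((LinearMap.toMatrix (MonoidAlgebra.basis X ℂ) (MonoidAlgebra.basis X ℂ))
        (Representation.ofMulAction ℂ G X g)).diag x = if g • x = x then (1:ℂ) else 0 := by
    intro x
    rw [Matrix.diag_apply, LinearMap.toMatrix_apply]
    have hb : (MonoidAlgebra.basis X ℂ) x = MonoidAlgebra.single x 1 := by
      simp
    rw [hb, Representation.ofMulAction_single]
    simp [MonoidAlgebra.basis, MonoidAlgebra.single_apply, Finsupp.single_apply, eq_comm]
  rw [Finset.sum_congr rfl (fun x _ => hdiag x), Finset.sum_boole]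

lemma nat_card_fixedBy (X : Type) [Fintype X] [MulAction G X] (g : G) :
    Nat.card (MulAction.fixedBy X g) = (univ.filter (fun x : X => g • x = x)).card := by
  rw [Nat.card_eq_fintype_card, Fintype.card_subtype]
  congr 1


lemma perm_inner (H : Subgroup G) (V : FDRep ℂ G) (x : G ⧸ H) :
    ∑ g ∈ univ.filter (fun g : G => g • x = x), V.character g⁻¹
      = (Fintype.card ↥H : ℂ) * (resInv H V : ℂ) := by
  set a := Quotient.out x with ha
  have hx : (QuotientGroup.mk a : G ⧸ H) = x := QuotientGroup.out_eq' x
  have hmem : ∀ g : G, g • x = x → a⁻¹ * g⁻¹ * a ∈ H := by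
    intro g hg
    rw [← hx, MulAction.Quotient.smul_mk] at hg
    have h2 := QuotientGroup.eq.mp hg
    have : (g • a : G)⁻¹ * a = a⁻¹ * g⁻¹ * a := by
      show (g * a)⁻¹ * a = a⁻¹ * g⁻¹ * a
      group
    rwa [this] at h2
  have hmem2 : ∀ h : ↥H, (a * (↑h)⁻¹ * a⁻¹) • x = x := by
    intro h
    rw [← hx, MulAction.Quotient.smul_mk]
    apply (QuotientGroup.eq (s := H)).mpr
    have : ((a * (↑h)⁻¹ * a⁻¹ : G) • a : G)⁻¹ * a = (↑h : G) := by
      show (a * (↑h)⁻¹ * a⁻¹ * a)⁻¹ * a = (↑h : G)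
      group
    rw [this]
    exact h.2
  have hsum : ∑ g ∈ univ.filter (fun g : G => g • x = x), V.character g⁻¹
      = ∑ h : ↥H, V.character ↑h := by
    refine Finset.sum_bij' (fun g hg => (⟨a⁻¹ * g⁻¹ * a, hmem g (by simpa using hg)⟩ : ↥H))
      (fun h _ => a * (↑h)⁻¹ * a⁻¹) ?_ ?_ ?_ ?_ ?_
    · intro g hg
      exact Finset.mem_univ _
    · intro h _
      simpa using hmem2 h
    · intro g hg
      group
    · intro h _
      apply Subtype.ext
      show a⁻¹ * (a * (↑h)⁻¹ * a⁻¹)⁻¹ * a = (↑h : G)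
      group
    · intro g hg
      show V.character g⁻¹ = V.character (a⁻¹ * g⁻¹ * a)
      have := FDRep.char_conj V g⁻¹ a⁻¹
      rw [inv_inv] at this
      rw [← this]
  rw [hsum, sum_char_subgroup]

lemma perm_coeff (H : Subgroup G) (V : FDRep ℂ G) :
    ∑ g : G, (FDRep.of (Representation.ofMulAction ℂ G (G ⧸ H))).character g * V.character g⁻¹
      = (Fintype.card (G ⧸ H) : ℂ) * ((Fintype.card ↥H : ℂ) * (resInv H V : ℂ)) := by
  have h1 : ∀ g : G,
      (FDRep.of (Representation.ofMulAction ℂ G (G ⧸ H))).character g * V.character g⁻¹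
      = ∑ x : G ⧸ H, (if g • x = x then V.character g⁻¹ else 0) := by
    intro g
    rw [char_ofMulAction, ← Finset.sum_boole, Finset.sum_mul]
    exact Finset.sum_congr rfl fun x _ => by split <;> simp
  rw [Finset.sum_congr rfl (fun g _ => h1 g), Finset.sum_comm]
  have h2 : ∀ x : G ⧸ H, ∑ g : G, (if g • x = x then V.character g⁻¹ else 0)
      = (Fintype.card ↥H : ℂ) * (resInv H V : ℂ) := by
    intro x
    rw [← Finset.sum_filter]
    exact perm_inner H V x
  rw [Finset.sum_congr rfl (fun x _ => h2 x), Finset.sum_const, Finset.card_univ,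
    nsmul_eq_mul]

lemma reg_char (g : G) :
    (FDRep.of (Representation.ofMulAction ℂ G G)).character g
      = if g = 1 then (Fintype.card G : ℂ) else 0 := by
  rw [char_ofMulAction]
  split
  · next h =>
    subst h
    norm_num
  · next h =>
    suffices hs : univ.filter (fun x : G => g • x = x) = ∅ by rw [hs]; simp
    apply Finset.filter_eq_empty_iff.mpr
    intro x _
    show ¬ g * x = x
    intro hgx
    exact h (by
      have : g * x = 1 * x := by rw [hgx, one_mul]
      exact mul_right_cancel this)


end QFS
end

/-- lower bound on `D_H` via fixed points of elements of `H` acting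
on the coset space `G/H`. -/
theorem stmt_3 {G : Type} [Group G] [Fintype G] {ι : Type} [Fintype ι]
    (ρ : ι → FDRep ℂ G) (hρ : IsCompleteIrrepFamily ρ)
    (H : Subgroup G) (hH : H ≠ ⊥) :
    (Fintype.card G : ℝ)⁻¹ *
        ∑ h ∈ Finset.univ.filter (fun h : G => h ∈ H ∧ h ≠ 1),
          (Nat.card (MulAction.fixedBy (G ⧸ H) h) : ℝ)
      < weakDist ρ H := by
  classical
  have hcardG : (Fintype.card G : ℂ) ≠ 0 := Nat.cast_ne_zero.mpr Fintype.card_ne_zero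
  set d : ι → ℕ := fun i => Module.finrank ℂ (ρ i) with hd
  set m : ι → ℕ := fun i => QFS.resInv H (ρ i) with hm
  set P := FDRep.of (Representation.ofMulAction ℂ G (G ⧸ H)) with hP
  obtain ⟨n, hn⟩ := QFS.char_expansion ρ hρ _ P rfl
  have h3 : (Fintype.card (G ⧸ H) : ℂ) * (Fintype.card ↥H : ℂ) = (Fintype.card G : ℂ) := by
    have h := Subgroup.card_eq_card_quotient_mul_card_subgroup H
    rw [Nat.card_eq_fintype_card, Nat.card_eq_fintype_card, Nat.card_eq_fintype_card] at h
    exact_mod_cast (congrArg (Nat.cast : ℕ → ℂ) h).symm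
  have hnm : ∀ j, n j = m j := by
    intro j
    have h1 := QFS.coeff_eq ρ hρ P n hn j
    rw [QFS.perm_coeff H (ρ j)] at h1
    rw [← mul_assoc, h3] at h1
    rw [mul_comm ((Fintype.card G : ℂ)) _] at h1
    have := mul_right_cancel₀ hcardG h1
    exact_mod_cast this.symm
  -- χ_i(1) = d i
  have hchar1 : ∀ i, (ρ i).character 1 = (d i : ℂ) := fun i => FDRep.char_one (ρ i)
  -- Σ d_i m_i = card (G ⧸ H)
  have hP1 : P.character 1 = (Fintype.card (G ⧸ H) : ℂ) := by
    rw [hP, QFS.char_ofMulAction]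
    norm_num [one_smul, Finset.card_univ]
  have hdm : ∑ i, m i * d i = Fintype.card (G ⧸ H) := by
    have h1 := hn 1
    rw [hP1] at h1
    rw [Finset.sum_congr rfl (fun i _ => by rw [hchar1 i, hnm i])] at h1
    have h2 : ((∑ i, m i * d i : ℕ) : ℂ) = (Fintype.card (G ⧸ H) : ℂ) := by
      rw [h1]
      push_cast
      rfl
    exact_mod_cast h2
  -- Σ d_i d_i = card G
  set R := FDRep.of (Representation.ofMulAction ℂ G G) with hR
  obtain ⟨n', hn'⟩ := QFS.char_expansion ρ hρ _ R rfl
  have hn'd : ∀ j, n' j = d j := by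
    intro j
    have h1 := QFS.coeff_eq ρ hρ R n' hn' j
    have h2 : ∑ g : G, R.character g * (ρ j).character g⁻¹
        = (d j : ℂ) * (Fintype.card G : ℂ) := by
      rw [Finset.sum_eq_single 1]
      · rw [hR, QFS.reg_char, if_pos rfl, inv_one, hchar1 j, mul_comm]
      · intro g _ hg
        rw [hR, QFS.reg_char, if_neg hg, zero_mul]
      · intro hno
        exact absurd (Finset.mem_univ 1) hno
    rw [h2] at h1
    have := mul_right_cancel₀ hcardG h1
    exact_mod_cast this.symm
  have hdd : ∑ i, d i * d i = Fintype.card G := by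
    have h1 := hn' 1
    have hR1 : R.character 1 = (Fintype.card G : ℂ) := by
      rw [hR, QFS.reg_char, if_pos rfl]
    rw [hR1] at h1
    rw [Finset.sum_congr rfl (fun i _ => by rw [hchar1 i, hn'd i])] at h1
    have h2 : ((∑ i, d i * d i : ℕ) : ℂ) = (Fintype.card G : ℂ) := by
      rw [h1]
      push_cast
      rfl
    exact_mod_cast h2
  have hmd : ∀ j, m j ≤ d j := fun j => Submodule.finrank_le _
  have hH2 : 2 ≤ Fintype.card ↥H := by
    have h := (Subgroup.one_lt_card_iff_ne_bot H).mpr hH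
    rw [Nat.card_eq_fintype_card] at h
    omega
  -- strictness witness
  have hw : ∃ j0, Fintype.card ↥H * m j0 < d j0 := by
    by_contra hno
    push_neg at hno
    have hterm : ∀ j ∈ (univ : Finset ι), d j * d j ≤ Fintype.card ↥H * (m j * d j) := by
      intro j _
      calc d j * d j ≤ (Fintype.card ↥H * m j) * d j :=
            Nat.mul_le_mul_right _ (hno j)
        _ = Fintype.card ↥H * (m j * d j) := by ring
    have hsum : ∑ j, d j * d j = ∑ j, Fintype.card ↥H * (m j * d j) := by
      have hle := Finset.sum_le_sum hterm
      have heqv : ∑ j, Fintype.card ↥H * (m j * d j) = Fintype.card G := by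
        rw [← Finset.mul_sum, hdm]
        have hq := Subgroup.card_eq_card_quotient_mul_card_subgroup H
        rw [Nat.card_eq_fintype_card, Nat.card_eq_fintype_card, Nat.card_eq_fintype_card] at hq
        rw [hq, Nat.mul_comm]
      omega
    have heach := (Finset.sum_eq_sum_iff_of_le hterm).mp hsum
    -- trivial representation
    have htriv : Simple (FDRep.of (Representation.trivial ℂ (G := G) (V := ℂ))) := by
      apply QFS.simple_of_irreducible
      · have h9 : Module.finrank ℂ (FDRep.of (Representation.trivial ℂ (G := G) (V := ℂ))) = 1 :=
          Module.finrank_self ℂ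
        omega
      · intro W _
        exact Ideal.eq_bot_or_top W
    obtain ⟨j0, ⟨iso⟩⟩ := hρ.2.2 _ htriv
    have hd1 : d j0 = 1 := by
      have hci := FDRep.char_iso iso
      have h1 := congrFun hci 1
      rw [FDRep.char_one, FDRep.char_one] at h1
      have h2 : (d j0 : ℂ) = ((1 : ℕ) : ℂ) := by
        calc (d j0 : ℂ)
            = (Module.finrank ℂ (FDRep.of (Representation.trivial ℂ (G := G) (V := ℂ))) : ℂ) := h1
          _ = ((1 : ℕ) : ℂ) := by
              rw [show Module.finrank ℂ (FDRep.of (Representation.trivial ℂ (G := G) (V := ℂ)))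
                = 1 from Module.finrank_self ℂ]
      exact_mod_cast h2
    have h5 := heach j0 (Finset.mem_univ j0)
    rw [hd1] at h5
    simp only [mul_one, one_mul] at h5
    rcases Nat.eq_zero_or_pos (m j0) with hz | hpos
    · rw [hz] at h5
      omega
    · have : 2 * 1 ≤ Fintype.card ↥H * m j0 := Nat.mul_le_mul hH2 hpos
      omega
  obtain ⟨j0, hj0⟩ := hw
  have hC : ∑ h ∈ univ.filter (fun h : G => h ∈ H ∧ h ≠ 1), P.character h
      = ∑ j, (m j : ℂ) * ((Fintype.card ↥H : ℂ) * (m j : ℂ) - (d j : ℂ)) := by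
    rw [Finset.sum_congr rfl (fun h _ => hn h), Finset.sum_comm]
    refine Finset.sum_congr rfl fun j _ => ?_
    rw [← Finset.mul_sum, QFS.sum_filter_char, hnm j]
  have h5 : ∀ h : G, (Nat.card (MulAction.fixedBy (G ⧸ H) h) : ℂ) = P.character h := by
    intro h
    rw [QFS.nat_card_fixedBy, ← QFS.char_ofMulAction]
  have hLHS : ∑ h ∈ univ.filter (fun h : G => h ∈ H ∧ h ≠ 1),
      (Nat.card (MulAction.fixedBy (G ⧸ H) h) : ℝ)
      = ∑ j, (m j : ℝ) * ((Fintype.card ↥H : ℝ) * (m j : ℝ) - (d j : ℝ)) := by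
    have hcc : ((∑ h ∈ univ.filter (fun h : G => h ∈ H ∧ h ≠ 1),
        (Nat.card (MulAction.fixedBy (G ⧸ H) h) : ℝ) : ℝ) : ℂ)
        = ((∑ j, (m j : ℝ) * ((Fintype.card ↥H : ℝ) * (m j : ℝ) - (d j : ℝ)) : ℝ) : ℂ) := by
      push_cast
      rw [Finset.sum_congr rfl (fun h _ => h5 h), hC]
    exact_mod_cast hcc
  have habs : ∀ j, ‖∑ h ∈ univ.filter (fun h : G => h ∈ H ∧ h ≠ 1),
        (ρ j).character h‖
      = |(Fintype.card ↥H : ℝ) * (m j : ℝ) - (d j : ℝ)| := by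
    intro j
    rw [QFS.sum_filter_char]
    rw [show (Fintype.card ↥H : ℂ) * (QFS.resInv H (ρ j) : ℂ)
          - (Module.finrank ℂ (ρ j) : ℂ)
        = (((Fintype.card ↥H : ℝ) * (m j : ℝ) - (d j : ℝ) : ℝ) : ℂ) by push_cast; rfl]
    exact (Complex.norm_real _).trans (Real.norm_eq_abs _)
  rw [hLHS]
  simp only [weakDist]
  simp only [habs]
  apply mul_lt_mul_of_pos_left _ (by positivity : (0:ℝ) < (Fintype.card G : ℝ)⁻¹)
  apply Finset.sum_lt_sum
  · intro j _
    rcases le_or_gt 0 ((Fintype.card ↥H : ℝ) * (m j : ℝ) - (d j : ℝ)) with hpos | hneg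
    · rw [abs_of_nonneg hpos]
      exact mul_le_mul_of_nonneg_right (by exact_mod_cast hmd j) hpos
    · calc (m j : ℝ) * ((Fintype.card ↥H : ℝ) * (m j : ℝ) - (d j : ℝ)) ≤ 0 :=
            mul_nonpos_of_nonneg_of_nonpos (by positivity) (le_of_lt hneg)
        _ ≤ (d j : ℝ) * |(Fintype.card ↥H : ℝ) * (m j : ℝ) - (d j : ℝ)| := by positivity
  · refine ⟨j0, Finset.mem_univ j0, ?_⟩
    have hneg : (Fintype.card ↥H : ℝ) * (m j0 : ℝ) - (d j0 : ℝ) < 0 := by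
      rw [sub_neg]
      exact_mod_cast hj0
    have hdpos : (0:ℝ) < (d j0 : ℝ) := by
      have : 0 < d j0 := lt_of_le_of_lt (Nat.zero_le _) hj0
      exact_mod_cast this
    calc (m j0 : ℝ) * ((Fintype.card ↥H : ℝ) * (m j0 : ℝ) - (d j0 : ℝ)) ≤ 0 :=
          mul_nonpos_of_nonneg_of_nonpos (by positivity) (le_of_lt hneg)
      _ < (d j0 : ℝ) * |(Fintype.card ↥H : ℝ) * (m j0 : ℝ) - (d j0 : ℝ)| :=
          mul_pos hdpos (abs_pos.mpr (ne_of_lt hneg))
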